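/- For every fixed λ ∈ Λ, every unit vector ξ ∈ ℝ⁵, and every ρ of the form ρ = μ(g) = ∫ ν a g dv for some nonnegative g, not almost-everywhere zero, with ν(1+|v|²)g integrable, the one-dimensional function z_ξ(s) = z(λ + sξ; ρ) attains its minimum at a unique point s* lying in the open interval I(ξ,λ) = (−s_b(−ξ,λ), s_b(ξ,λ)), where s_b(ξ,λ) = sup{ s : λ + sξ ∈ Λ } (with value +∞ if the boundary of Λ is never met in direction ξ); in particular the minimum is not attained at the endpoints. -/

import Mathlib

open MeasureTheory Real Filter
open scoped Topology

set_option maxHeartbeats 1000000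

noncomputable section

abbrev V3 : Type := Fin 3 → ℝ

def dot3 (a b : V3) : ℝ := ∑ i, a i * b i

def nsq (v : V3) : ℝ := ∑ i, (v i) ^ 2

abbrev L5 : Type := ℝ × V3 × ℝ

def dot5 (a b : L5) : ℝ := a.1 * b.1 + dot3 a.2.1 b.2.1 + a.2.2 * b.2.2

def aVec (m : ℝ) (v : V3) : L5 := (m, m • v, m * nsq v)

def expA (m : ℝ) (l : L5) (v : V3) : ℝ := Real.exp (dot5 l (aVec m v))

def momVec (m : ℝ) (ν g : V3 → ℝ) : L5 :=
  (∫ v, ν v * (m * g v), fun i => ∫ v, ν v * (m * v i) * g v,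
    ∫ v, ν v * (m * nsq v) * g v)

def zdual (m : ℝ) (ν : V3 → ℝ) (l ρ : L5) : ℝ :=
  (∫ v, ν v * expA m l v) - dot5 l ρ

def entH (z : ℝ) : ℝ := z * Real.log z - z

def dualCLM (ρ : L5) : L5 →L[ℝ] ℝ :=
  LinearMap.toContinuousLinearMap
    { toFun := fun δ => dot5 δ ρ
      map_add' := by
        intro a b
        simp [dot5, dot3, Prod.fst_add, Prod.snd_add, Pi.add_apply, add_mul,
          Finset.sum_add_distrib]
        ring
      map_smul' := by
        intro c a
        simp only [dot5, dot3, Prod.smul_fst, Prod.smul_snd, Pi.smul_apply,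
          smul_eq_mul, Finset.mul_sum, RingHom.id_apply]
        ring_nf
        rw [Finset.mul_sum]
        ring_nf }


lemma finite_qroots {γ β α : ℝ} (h : γ ≠ 0 ∨ β ≠ 0) :
    {x : ℝ | γ * x ^ 2 + β * x + α = 0}.Finite := by
  have hp : (Polynomial.C γ * Polynomial.X ^ 2 + Polynomial.C β * Polynomial.X
      + Polynomial.C α) ≠ 0 := by
    intro hc
    rcases h with h | h
    · apply h
      have := congrArg (fun p => Polynomial.coeff p 2) hc
      simpa [Polynomial.coeff_add, Polynomial.coeff_C] using this
    · apply h
      have := congrArg (fun p => Polynomial.coeff p 1) hc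
      simpa [Polynomial.coeff_add, Polynomial.coeff_C] using this
  refine (Polynomial.finite_setOf_isRoot hp).subset ?_
  intro x hx
  simp only [Set.mem_setOf_eq] at hx ⊢
  simpa [Polynomial.IsRoot] using hx

lemma cont_quad (c₀ : ℝ) (c : V3) (c₂ : ℝ) :
    Continuous fun v : V3 => c₀ + dot3 c v + c₂ * nsq v := by
  unfold dot3 nsq
  fun_prop


lemma insert_eval (c₀ : ℝ) (c : V3) (c₂ : ℝ) (i : Fin 3) (x : ℝ) (y : Fin 2 → ℝ) :
    c₀ + dot3 c (i.insertNth x y) + c₂ * nsq (i.insertNth x y)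
    = c₂ * x ^ 2 + c i * x
      + (c₀ + (∑ j, c (i.succAbove j) * y j) + c₂ * ∑ j, (y j) ^ 2) := by
  unfold dot3 nsq
  rw [Fin.sum_univ_succAbove (fun j => c j * (i.insertNth x y : V3) j) i,
    Fin.sum_univ_succAbove (fun j => ((i.insertNth x y : V3) j) ^ 2) i]
  simp only [Fin.insertNth_apply_same, Fin.insertNth_apply_succAbove]
  ring

lemma quad_ae_ne (c₀ : ℝ) (c : V3) (c₂ : ℝ) (hne : ¬(c₀ = 0 ∧ c = 0 ∧ c₂ = 0)) :
    ∀ᵐ v : V3, c₀ + dot3 c v + c₂ * nsq v ≠ 0 := by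
  by_cases hc : c₂ = 0 ∧ c = 0
  · obtain ⟨h2, hcc⟩ := hc
    have h0 : c₀ ≠ 0 := fun h => hne ⟨h, hcc, h2⟩
    filter_upwards with v
    simp [hcc, h2, dot3, h0]
  · -- pick an index
    have hi : ∃ i : Fin 3, c₂ ≠ 0 ∨ c i ≠ 0 := by
      by_cases h2 : c₂ = 0
      · have : c ≠ 0 := fun h => hc ⟨h2, h⟩
        obtain ⟨i, hi⟩ : ∃ i, c i ≠ 0 := by
          by_contra h
          push_neg at h
          exact this (funext h)
        exact ⟨i, Or.inr hi⟩
      · exact ⟨0, Or.inl h2⟩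
    obtain ⟨i, hi⟩ := hi
    set S : Set V3 := {v | c₀ + dot3 c v + c₂ * nsq v = 0} with hS
    have hSm : MeasurableSet S :=
      (isClosed_eq (cont_quad c₀ c c₂) continuous_const).measurableSet
    have hkey : (volume : Measure V3) S = 0 := by
      have hvol : (volume : Measure V3) = Measure.pi fun _ => (volume : Measure ℝ) :=
        rfl
      have mp := measurePreserving_piFinSuccAbove (fun _ : Fin 3 => (volume : Measure ℝ)) i
      have hT : MeasurableSet ((MeasurableEquiv.piFinSuccAbove (fun _ => ℝ) i).symm ⁻¹' S) :=
        (MeasurableEquiv.piFinSuccAbove (fun _ => ℝ) i).symm.measurable hSm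
      have mps := MeasurePreserving.symm (MeasurableEquiv.piFinSuccAbove (fun _ => ℝ) i) mp
      rw [hvol, ← mps.measure_preimage hSm.nullMeasurableSet]
      rw [Measure.prod_apply_symm hT]
      have hslice : ∀ y : (Fin 2 → ℝ),
          ((fun x => (x, y)) ⁻¹'
            ((MeasurableEquiv.piFinSuccAbove (fun _ => ℝ) i).symm ⁻¹' S)) =
          {x : ℝ | c₂ * x ^ 2 + c i * x +
            (c₀ + (∑ j, c (i.succAbove j) * y j) + c₂ * (∑ j, (y j) ^ 2)) = 0} := by
        intro y
        ext x
        have hins : ((MeasurableEquiv.piFinSuccAbove (fun _ => ℝ) i).symm (x, y)) =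
            i.insertNth x y := rfl
        simp only [Set.mem_preimage, Set.mem_setOf_eq, hS, hins, insert_eval]
      have : ∀ y : (Fin 2 → ℝ),
          (volume : Measure ℝ) ((fun x => (x, y)) ⁻¹'
            ((MeasurableEquiv.piFinSuccAbove (fun _ => ℝ) i).symm ⁻¹' S)) = 0 := by
        intro y
        rw [hslice y]
        exact Set.Finite.measure_zero (finite_qroots hi) _
      rw [lintegral_congr this, lintegral_zero]
    have hset : {v : V3 | ¬ (c₀ + dot3 c v + c₂ * nsq v ≠ 0)} = S := by
      ext v; simp [hS]
    rw [ae_iff, hset]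
    exact hkey

lemma dot5_add_smul (l ξ w : L5) (s : ℝ) :
    dot5 (l + s • ξ) w = dot5 l w + s * dot5 ξ w := by
  unfold dot5 dot3
  simp only [Prod.fst_add, Prod.snd_add, Prod.smul_fst, Prod.smul_snd,
    Pi.add_apply, Pi.smul_apply, smul_eq_mul, add_mul, Finset.sum_add_distrib,
    Finset.mul_sum]
  ring_nf
  rw [Finset.mul_sum]
  ring_nf

lemma expA_line (m : ℝ) (l ξ : L5) (s : ℝ) (v : V3) :
    expA m (l + s • ξ) v
      = Real.exp (dot5 l (aVec m v) + s * dot5 ξ (aVec m v)) := by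
  rw [expA, dot5_add_smul]

lemma cont_aVec_dot (m : ℝ) (w : L5) :
    Continuous fun v : V3 => dot5 w (aVec m v) := by
  unfold dot5 aVec dot3 nsq
  simp only [Pi.smul_apply, smul_eq_mul]
  fun_prop

lemma nsq_nonneg (v : V3) : 0 ≤ nsq v := by
  exact Finset.sum_nonneg fun i _ => sq_nonneg _

lemma abs_coord_le (v : V3) (i : Fin 3) : |v i| ≤ 1 + nsq v := by
  have h : (v i) ^ 2 ≤ nsq v := by
    unfold nsq
    exact Finset.single_le_sum (f := fun j => (v j) ^ 2)
      (fun j _ => sq_nonneg _) (Finset.mem_univ i)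
  cases le_or_gt 0 (v i) with
  | inl h2 => rw [abs_of_nonneg h2]; nlinarith
  | inr h2 => rw [abs_of_neg h2]; nlinarith

lemma dot5_aVec_eq (m : ℝ) (η : L5) (v : V3) :
    dot5 η (aVec m v) = m * η.1 + (∑ i, η.2.1 i * (m * v i)) + η.2.2 * (m * nsq v) := by
  unfold dot5 aVec dot3
  simp only [Pi.smul_apply, smul_eq_mul]
  ring_nf

lemma abs_dot5_aVec_le (m : ℝ) (hm : 0 < m) (η : L5) (v : V3) :
    |dot5 η (aVec m v)|
      ≤ m * (|η.1| + (∑ i, |η.2.1 i|) + |η.2.2|) * (1 + nsq v) := by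
  have hn := nsq_nonneg v
  rw [dot5_aVec_eq]
  have h1 : |m * η.1| ≤ m * |η.1| * (1 + nsq v) := by
    rw [abs_mul, abs_of_nonneg hm.le]
    nlinarith [abs_nonneg η.1, mul_nonneg hm.le (abs_nonneg η.1)]
  have h2 : |∑ i, η.2.1 i * (m * v i)| ≤ (∑ i, |η.2.1 i|) * (m * (1 + nsq v)) := by
    refine (Finset.abs_sum_le_sum_abs _ _).trans ?_
    rw [Finset.sum_mul]
    refine Finset.sum_le_sum fun i _ => ?_
    rw [abs_mul, abs_mul, abs_of_nonneg hm.le]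
    have := abs_coord_le v i
    nlinarith [abs_nonneg (η.2.1 i), abs_nonneg (v i),
      mul_nonneg (abs_nonneg (η.2.1 i)) hm.le]
  have h3 : |η.2.2 * (m * nsq v)| ≤ |η.2.2| * (m * (1 + nsq v)) := by
    rw [abs_mul, abs_mul, abs_of_nonneg hm.le, abs_of_nonneg hn]
    nlinarith [abs_nonneg η.2.2, mul_nonneg (abs_nonneg η.2.2) hm.le]
  calc |m * η.1 + (∑ i, η.2.1 i * (m * v i)) + η.2.2 * (m * nsq v)|
      ≤ |m * η.1| + |∑ i, η.2.1 i * (m * v i)| + |η.2.2 * (m * nsq v)| :=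
        abs_add_three _ _ _
    _ ≤ m * |η.1| * (1 + nsq v) + (∑ i, |η.2.1 i|) * (m * (1 + nsq v))
        + |η.2.2| * (m * (1 + nsq v)) := by linarith
    _ = m * (|η.1| + (∑ i, |η.2.1 i|) + |η.2.2|) * (1 + nsq v) := by ring

lemma int_nuAg (m : ℝ) (hm : 0 < m) (ν g : V3 → ℝ)
    (hνmeas : Measurable ν) (hgmeas : Measurable g)
    (hν0 : ∀ v, 0 ≤ ν v) (hg0 : ∀ v, 0 ≤ g v)
    (hgint : Integrable (fun v => ν v * (1 + nsq v) * g v)) (η : L5) :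
    Integrable (fun v => ν v * dot5 η (aVec m v) * g v) := by
  set C := m * (|η.1| + (∑ i, |η.2.1 i|) + |η.2.2|) with hC
  refine (hgint.const_mul C).mono' ?_ ?_
  · exact ((hνmeas.mul (cont_aVec_dot m η).measurable).mul hgmeas).aestronglyMeasurable
  · filter_upwards with v
    have hb := abs_dot5_aVec_le m hm η v
    have hn := nsq_nonneg v
    rw [Real.norm_eq_abs, abs_mul, abs_mul, abs_of_nonneg (hν0 v),
      abs_of_nonneg (hg0 v)]
    rw [← hC] at hb
    nlinarith [mul_nonneg (mul_nonneg (hν0 v) (hg0 v))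
      (sub_nonneg.mpr hb), mul_nonneg (hν0 v) (hg0 v), abs_nonneg (dot5 η (aVec m v))]

lemma dot5_momVec (m : ℝ) (hm : 0 < m) (ν g : V3 → ℝ)
    (hνmeas : Measurable ν) (hgmeas : Measurable g)
    (hν0 : ∀ v, 0 ≤ ν v) (hg0 : ∀ v, 0 ≤ g v)
    (hgint : Integrable (fun v => ν v * (1 + nsq v) * g v)) (η : L5) :
    dot5 η (momVec m ν g) = ∫ v, ν v * dot5 η (aVec m v) * g v := by
  have hbase : Integrable (fun v => m * (ν v * (1 + nsq v) * g v)) :=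
    hgint.const_mul m
  have hmg : Measurable (fun v : V3 => nsq v) := by
    unfold nsq; fun_prop
  have h1 : Integrable (fun v => ν v * (m * g v)) := by
    refine hbase.mono' ?_ ?_
    · exact ((hνmeas.const_mul m).mul hgmeas).aestronglyMeasurable.congr
        (by filter_upwards with v; simp only [Pi.mul_apply]; ring)
    · filter_upwards with v
      have h2 : 0 ≤ ν v * g v := mul_nonneg (hν0 v) (hg0 v)
      have h4 := nsq_nonneg v
      rw [Real.norm_eq_abs, abs_of_nonneg (by nlinarith [mul_nonneg h2 hm.le])]
      nlinarith [mul_nonneg (mul_nonneg h2 h4) hm.le]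
  have h2 : ∀ i : Fin 3, Integrable (fun v => ν v * (m * v i) * g v) := by
    intro i
    refine hbase.mono' ?_ ?_
    · exact (((hνmeas.mul ((measurable_pi_apply i).const_mul m))).mul
        hgmeas).aestronglyMeasurable
    · filter_upwards with v
      have h2 : 0 ≤ ν v * g v := mul_nonneg (hν0 v) (hg0 v)
      have h3 : |v i| ≤ 1 + nsq v := by
        have : (v i) ^ 2 ≤ nsq v := by
          unfold nsq
          exact Finset.single_le_sum (f := fun j => (v j) ^ 2)
            (fun j _ => sq_nonneg _) (Finset.mem_univ i)
        cases le_or_gt 0 (v i) with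
        | inl h => rw [abs_of_nonneg h]; nlinarith
        | inr h => rw [abs_of_neg h]; nlinarith
      rw [Real.norm_eq_abs, abs_mul, abs_mul, abs_of_nonneg (hν0 v),
        abs_of_nonneg (hg0 v), abs_mul, abs_of_nonneg hm.le]
      have h5 := nsq_nonneg v
      nlinarith [mul_nonneg (mul_nonneg h2 (abs_nonneg (v i))) hm.le,
        mul_nonneg (mul_nonneg h2 hm.le) (sub_nonneg.mpr h3)]
  have h3 : Integrable (fun v => ν v * (m * nsq v) * g v) := by
    refine hbase.mono' ?_ ?_
    · exact ((hνmeas.mul (hmg.const_mul m)).mul hgmeas).aestronglyMeasurable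
    · filter_upwards with v
      have h2 : 0 ≤ ν v * g v := mul_nonneg (hν0 v) (hg0 v)
      have h4 := nsq_nonneg v
      rw [Real.norm_eq_abs,
        abs_of_nonneg (by nlinarith [mul_nonneg (mul_nonneg h2 h4) hm.le])]
      nlinarith [mul_nonneg (mul_nonneg h2 h4) hm.le]
  unfold momVec dot5 dot3
  simp only
  rw [← integral_const_mul, ← integral_const_mul]
  have hsum : ∑ i, η.2.1 i * ∫ v, ν v * (m * v i) * g v
      = ∫ v, ∑ i, η.2.1 i * (ν v * (m * v i) * g v) := by
    rw [integral_finset_sum]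
    · exact Finset.sum_congr rfl fun i _ => (integral_const_mul _ _).symm
    · exact fun i _ => (h2 i).const_mul _
  have hsumint : Integrable (fun v => ∑ i, η.2.1 i * (ν v * (m * v i) * g v)) :=
    integrable_finset_sum _ fun i _ => (h2 i).const_mul _
  have hA : Integrable (fun v =>
      η.1 * (ν v * (m * g v)) + ∑ i, η.2.1 i * (ν v * (m * v i) * g v)) :=
    (h1.const_mul _).add hsumint
  rw [hsum, ← integral_add (h1.const_mul _) hsumint, ← integral_add hA (h3.const_mul _)]
  congr 1
  ext v
  simp only [aVec, Pi.smul_apply, smul_eq_mul]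
  have hmid : ν v * (∑ i, η.2.1 i * (m * v i)) * g v
      = ∑ i, η.2.1 i * (ν v * (m * v i) * g v) := by
    rw [Finset.mul_sum, Finset.sum_mul]
    exact Finset.sum_congr rfl fun i _ => by ring
  symm
  calc ν v * (η.1 * m + ∑ i, η.2.1 i * (m * v i) + η.2.2 * (m * nsq v)) * g v
      = η.1 * (ν v * (m * g v)) + ν v * (∑ i, η.2.1 i * (m * v i)) * g v
        + η.2.2 * (ν v * (m * nsq v) * g v) := by ring
    _ = _ := by rw [hmid]

lemma exp_ge_quad {x : ℝ} (hx : 0 ≤ x) : x ^ 2 / 4 ≤ Real.exp x := by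
  have h1 : x / 2 + 1 ≤ Real.exp (x / 2) := Real.add_one_le_exp _
  have h2 : (x / 2 + 1) ^ 2 ≤ Real.exp (x / 2) ^ 2 := by
    have := Real.exp_pos (x / 2)
    nlinarith
  have h3 : Real.exp (x / 2) ^ 2 = Real.exp x := by
    rw [sq, ← Real.exp_add]
    norm_num
  nlinarith [h2, h3]

lemma dot5_aVec_factor (m : ℝ) (η : L5) (v : V3) :
    dot5 η (aVec m v) = m * (η.1 + dot3 η.2.1 v + η.2.2 * nsq v) := by
  have hsum : (∑ i, η.2.1 i * (m * v i)) = ∑ i, m * (η.2.1 i * v i) :=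
    Finset.sum_congr rfl fun i _ => by ring
  rw [dot5_aVec_eq, hsum]
  unfold dot3
  rw [mul_add, mul_add, Finset.mul_sum]
  ring

lemma aene (m : ℝ) (hm : 0 < m) (η : L5) (hη : η ≠ 0) :
    ∀ᵐ v : V3, dot5 η (aVec m v) ≠ 0 := by
  have hne' : ¬(η.1 = 0 ∧ η.2.1 = 0 ∧ η.2.2 = 0) := by
    rintro ⟨h1, h2, h3⟩
    exact hη (Prod.ext h1 (Prod.ext h2 h3))
  filter_upwards [quad_ae_ne η.1 η.2.1 η.2.2 hne'] with v hv
  rw [dot5_aVec_factor]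
  exact mul_ne_zero hm.ne' hv

lemma coercive_right
    (m : ℝ) (hm : 0 < m)
    (ν : V3 → ℝ) (hνmeas : Measurable ν) (hνpos : ∀ v, 0 < ν v)
    (hass : ∀ l : L5, Integrable (fun v => ν v * expA m l v) ↔ l.2.2 < 0)
    (l : L5) (hl : l.2.2 < 0)
    (η : L5) (hη : η ≠ 0)
    (g : V3 → ℝ) (hgmeas : Measurable g) (hg0 : ∀ v, 0 ≤ g v)
    (hgne : ¬ g =ᵐ[volume] (fun _ => (0 : ℝ)))
    (hgint : Integrable (fun v => ν v * (1 + nsq v) * g v)) :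
    ∃ b : ℝ, 0 ≤ b ∧ (l + b • η).2.2 < 0 ∧
      ∀ s : ℝ, b < s → (l + s • η).2.2 < 0 →
        zdual m ν l (momVec m ν g) < zdual m ν (l + s • η) (momVec m ν g) := by
  set ρ := momVec m ν g with hρ
  set A : V3 → ℝ := fun v => dot5 η (aVec m v) with hA
  set B : V3 → ℝ := fun v => dot5 l (aVec m v) with hB
  have hAcont : Continuous A := cont_aVec_dot m η
  have hBcont : Continuous B := cont_aVec_dot m l
  have hsnd : ∀ s : ℝ, (l + s • η).2.2 = l.2.2 + s * η.2.2 := by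
    intro s
    simp [Prod.snd_add, Prod.smul_snd, smul_eq_mul]
  have hAne : ∀ᵐ v : V3, A v ≠ 0 := aene m hm η hη
  set q : ℝ := dot5 η ρ with hqdef
  have hq : q = ∫ v, ν v * A v * g v := by
    rw [hqdef, hρ, dot5_momVec m hm ν g hνmeas hgmeas (fun v => (hνpos v).le) hg0 hgint]
  have hIq : Integrable (fun v => ν v * A v * g v) :=
    int_nuAg m hm ν g hνmeas hgmeas (fun v => (hνpos v).le) hg0 hgint η
  have hf_int : ∀ s : ℝ, (l + s • η).2.2 < 0 →
      Integrable (fun v => ν v * Real.exp (B v + s * A v)) := by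
    intro s hs
    have h0 := (hass (l + s • η)).mpr hs
    have h2 : (fun v => ν v * expA m (l + s • η) v)
        = fun v => ν v * Real.exp (B v + s * A v) :=
      funext fun v => by rw [expA_line]
    rwa [h2] at h0
  have hf0_int : Integrable (fun v => ν v * Real.exp (B v)) := by
    have h0 := (hass l).mpr hl
    exact h0
  have hzd : ∀ s : ℝ, zdual m ν (l + s • η) ρ
      = (∫ v, ν v * Real.exp (B v + s * A v)) - dot5 l ρ - s * q := by
    intro s
    unfold zdual
    rw [dot5_add_smul]
    have h2 : (fun v => ν v * expA m (l + s • η) v)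
        = fun v => ν v * Real.exp (B v + s * A v) :=
      funext fun v => by rw [expA_line]
    rw [h2]
    ring
  have hzd0 : zdual m ν l ρ = (∫ v, ν v * Real.exp (B v)) - dot5 l ρ := rfl
  set z0 : ℝ := zdual m ν l ρ with hz0
  set D : ℝ := dot5 l ρ with hD
  rcases le_or_gt η.2.2 0 with hcase | hcase
  · -- η.2.2 ≤ 0 : half line [0,∞) contained in domain
    have hPs : ∀ s : ℝ, 0 ≤ s → (l + s • η).2.2 < 0 := by
      intro s hs
      rw [hsnd]
      nlinarith [mul_nonneg hs (neg_nonneg.mpr hcase)]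
    by_cases hb : ∀ᵐ v : V3, A v ≤ 0
    · -- q < 0
      have hqneg : q < 0 := by
        have h1 : ∀ᵐ v : V3, ν v * A v * g v ≤ 0 := by
          filter_upwards [hb] with v hv
          nlinarith [mul_nonneg (mul_nonneg (hνpos v).le (hg0 v)) (neg_nonneg.mpr hv)]
        have hne0 : ¬ (fun v => ν v * A v * g v) =ᵐ[volume] (fun _ => (0:ℝ)) := by
          intro hcontra
          apply hgne
          filter_upwards [hcontra, hAne] with v h1 h2
          rcases mul_eq_zero.mp h1 with h3 | h3
          · rcases mul_eq_zero.mp h3 with h4 | h4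
            · exact absurd h4 (hνpos v).ne'
            · exact absurd h4 h2
          · exact h3
        have h2 : 0 ≤ ∫ v, -(ν v * A v * g v) := by
          refine integral_nonneg_of_ae ?_
          filter_upwards [h1] with v hv
          simp only [Pi.zero_apply, Pi.neg_apply]
          linarith
        have h3 : (∫ v, -(ν v * A v * g v)) ≠ 0 := by
          intro h0
          have h4 := (integral_eq_zero_iff_of_nonneg_ae
            (by filter_upwards [h1] with v hv
                simp only [Pi.zero_apply, Pi.neg_apply]
                linarith) hIq.neg).mp h0
          apply hne0
          filter_upwards [h4] with v hv
          simpa [neg_eq_zero] using hv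
        have h5 : 0 < ∫ v, -(ν v * A v * g v) := lt_of_le_of_ne h2 (Ne.symm h3)
        rw [integral_neg] at h5
        rw [hq]
        linarith
      refine ⟨max 0 ((z0 + D) / (-q)), le_max_left _ _, hPs _ (le_max_left _ _), ?_⟩
      intro s hs hPs'
      have hs0 : 0 ≤ s := le_trans (le_max_left _ _) hs.le
      have h6 : (z0 + D) / (-q) < s := lt_of_le_of_lt (le_max_right _ _) hs
      have h7 : z0 + D < s * (-q) := (div_lt_iff₀ (neg_pos.mpr hqneg)).mp h6
      rw [hzd s]
      have h8 : 0 ≤ ∫ v, ν v * Real.exp (B v + s * A v) :=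
        integral_nonneg fun v => mul_nonneg (hνpos v).le (Real.exp_pos _).le
      nlinarith
    · -- positive part of A has positive measure
      have hpos : volume {v : V3 | ¬ A v ≤ 0} ≠ 0 := by
        rw [ae_iff] at hb
        exact hb
      have hTu : {v : V3 | ¬ A v ≤ 0} ⊆ ⋃ n : ℕ, {v : V3 | 1 / (n + 1 : ℝ) < A v} := by
        intro v hv
        simp only [Set.mem_setOf_eq, not_le] at hv
        obtain ⟨n, hn⟩ := exists_nat_one_div_lt hv
        exact Set.mem_iUnion.mpr ⟨n, hn⟩
      have hex : ∃ n : ℕ, volume {v : V3 | 1 / (n + 1 : ℝ) < A v} ≠ 0 := by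
        by_contra hcon
        push_neg at hcon
        exact hpos (measure_mono_null hTu (measure_iUnion_null_iff.mpr hcon))
      obtain ⟨n, hn⟩ := hex
      set ε : ℝ := 1 / (n + 1 : ℝ) with hε
      have hεpos : 0 < ε := by positivity
      set E : Set V3 := {v : V3 | ε < A v} with hE
      have hEmeas : MeasurableSet E :=
        measurableSet_lt measurable_const hAcont.measurable
      set c : ℝ := ∫ v in E, ν v * Real.exp (B v) with hc
      have hcpos : 0 < c := by
        rw [hc]
        rw [setIntegral_pos_iff_support_of_nonneg_ae
          (Eventually.of_forall fun v => mul_nonneg (hνpos v).le (Real.exp_pos _).le)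
          hf0_int.integrableOn]
        have hsup : Function.support (fun v : V3 => ν v * Real.exp (B v)) = Set.univ := by
          ext v
          simp only [Function.mem_support, Set.mem_univ, iff_true]
          exact (mul_pos (hνpos v) (Real.exp_pos _)).ne'
        rw [hsup, Set.univ_inter]
        exact pos_iff_ne_zero.mpr hn
      have hlb : ∀ s : ℝ, 0 ≤ s → (l + s • η).2.2 < 0 →
          Real.exp (ε * s) * c ≤ ∫ v, ν v * Real.exp (B v + s * A v) := by
        intro s hs hPs'
        have hint := hf_int s hPs'
        have h1 : (∫ v in E, ν v * Real.exp (B v + s * A v))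
            ≤ ∫ v, ν v * Real.exp (B v + s * A v) :=
          setIntegral_le_integral hint
            (Eventually.of_forall fun v => mul_nonneg (hνpos v).le (Real.exp_pos _).le)
        have h2 : (∫ v in E, Real.exp (ε * s) * (ν v * Real.exp (B v)))
            ≤ ∫ v in E, ν v * Real.exp (B v + s * A v) := by
          refine setIntegral_mono_on ((hf0_int.const_mul _).integrableOn)
            hint.integrableOn hEmeas ?_
          intro v hv
          have hAv : ε < A v := hv
          have h3 : Real.exp (ε * s) * Real.exp (B v) = Real.exp (B v + ε * s) := by
            rw [← Real.exp_add]; ring_nf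
          calc Real.exp (ε * s) * (ν v * Real.exp (B v))
              = ν v * Real.exp (B v + ε * s) := by rw [← h3]; ring
            _ ≤ ν v * Real.exp (B v + s * A v) := by
                refine mul_le_mul_of_nonneg_left ?_ (hνpos v).le
                refine Real.exp_le_exp.mpr ?_
                nlinarith
        rw [integral_const_mul] at h2
        calc Real.exp (ε * s) * c ≤ ∫ v in E, ν v * Real.exp (B v + s * A v) := h2
          _ ≤ _ := h1
      set K : ℝ := c * ε ^ 2 / 4 with hK
      have hKpos : 0 < K := by positivity
      refine ⟨max 1 ((|q| + |D| + |z0| + 1) / K), le_trans zero_le_one (le_max_left _ _),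
        hPs _ (le_trans zero_le_one (le_max_left _ _)), ?_⟩
      intro s hs hPs'
      have hs1 : 1 < s := lt_of_le_of_lt (le_max_left _ _) hs
      have hs0 : 0 ≤ s := by linarith
      have hKs : (|q| + |D| + |z0| + 1) / K < s := lt_of_le_of_lt (le_max_right _ _) hs
      have hKs' : |q| + |D| + |z0| + 1 < K * s := by
        rw [div_lt_iff₀ hKpos] at hKs
        linarith [hKs]
      have hquad : K * s ^ 2 ≤ Real.exp (ε * s) * c := by
        have h1 : (ε * s) ^ 2 / 4 ≤ Real.exp (ε * s) := exp_ge_quad (by positivity)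
        rw [hK]
        nlinarith [hcpos]
      rw [hzd s]
      have h8 := hlb s hs0 hPs'
      have h9 : (|q| + |D| + |z0| + 1) * s ≤ K * s * s :=
        mul_le_mul_of_nonneg_right hKs'.le hs0
      nlinarith [le_abs_self q, neg_abs_le q, le_abs_self D, neg_abs_le D,
        le_abs_self z0, neg_abs_le z0, abs_nonneg q, abs_nonneg D, abs_nonneg z0,
        mul_le_mul_of_nonneg_left hs1.le (abs_nonneg D),
        mul_le_mul_of_nonneg_left hs1.le (abs_nonneg z0),
        mul_le_mul_of_nonneg_left (le_abs_self q) hs0,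
        mul_le_mul_of_nonneg_left (neg_abs_le q) hs0]
  · -- η.2.2 > 0 : finite boundary point
    set sb : ℝ := -l.2.2 / η.2.2 with hsb
    have hsbpos : 0 < sb := div_pos (neg_pos.mpr hl) hcase
    have hsbzero : l.2.2 + sb * η.2.2 = 0 := by
      rw [hsb]
      field_simp
      ring
    have hδ : ∃ δ : ℝ, 0 < δ ∧ ∀ s : ℝ, (l + s • η).2.2 < 0 → sb - δ < s →
        ¬ (zdual m ν (l + s • η) ρ ≤ z0) := by
      by_contra hcon
      push_neg at hcon
      have hseq : ∀ n : ℕ, ∃ s : ℝ, (l + s • η).2.2 < 0 ∧ sb - 1 / (n + 1 : ℝ) < s ∧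
          zdual m ν (l + s • η) ρ ≤ z0 := by
        intro n
        obtain ⟨s, h1, h2, h3⟩ := hcon (1 / (n + 1 : ℝ)) (by positivity)
        exact ⟨s, h1, h2, h3⟩
      choose sn hsn1 hsn2 hsn3 using hseq
      have hsnlt : ∀ n, sn n < sb := by
        intro n
        have h2 := hsn1 n
        rw [hsnd] at h2
        have h3 : sn n * η.2.2 < sb * η.2.2 := by linarith [hsbzero]
        exact lt_of_mul_lt_mul_right h3 hcase.le

      have hsntend : Filter.Tendsto sn Filter.atTop (𝓝 sb) := by
        have hlow : Filter.Tendsto (fun n : ℕ => sb - 1 / (n + 1 : ℝ))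
            Filter.atTop (𝓝 sb) := by
          have h0 : Filter.Tendsto (fun n : ℕ => 1 / (n + 1 : ℝ)) Filter.atTop (𝓝 0) :=
            tendsto_one_div_add_atTop_nhds_zero_nat
          simpa using (tendsto_const_nhds.sub h0)
        exact tendsto_of_tendsto_of_tendsto_of_le_of_le hlow tendsto_const_nhds
          (fun n => (hsn2 n).le) (fun n => (hsnlt n).le)
      set C : ℝ := z0 + |D| + (|sb| + 1) * |q| with hC
      have hbound : ∀ n, (∫ v, ν v * Real.exp (B v + sn n * A v)) ≤ C := by
        intro n
        have h1 := hsn3 n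
        rw [hzd (sn n)] at h1
        have h2 : |sn n| ≤ |sb| + 1 := by
          have ha := hsn2 n
          have hb' := hsnlt n
          have : (1 : ℝ) / (n + 1 : ℝ) ≤ 1 := by
            rw [div_le_one (by positivity)]
            norm_num
          rw [abs_le]
          constructor
          · nlinarith [neg_abs_le sb]
          · nlinarith [le_abs_self sb]
        have h3 : sn n * q ≤ (|sb| + 1) * |q| := by
          calc sn n * q ≤ |sn n * q| := le_abs_self _
            _ = |sn n| * |q| := abs_mul _ _
            _ ≤ (|sb| + 1) * |q| := by
                exact mul_le_mul_of_nonneg_right h2 (abs_nonneg q)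
        rw [hC]
        nlinarith [neg_abs_le D, le_abs_self D]
      -- Fatou
      set fstar : V3 → ℝ := fun v => ν v * Real.exp (B v + sb * A v) with hfstar
      have hfsm : Measurable fstar :=
        hνmeas.mul (Real.measurable_exp.comp
          (hBcont.measurable.add (hAcont.measurable.const_mul sb)))
      have hmeasn : ∀ n, Measurable fun v : V3 =>
          ENNReal.ofReal (ν v * Real.exp (B v + sn n * A v)) := by
        intro n
        exact ENNReal.measurable_ofReal.comp
          (hνmeas.mul (Real.measurable_exp.comp
            (hBcont.measurable.add (hAcont.measurable.const_mul (sn n)))))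
      have hlim : ∀ v : V3, Filter.Tendsto
          (fun n => ENNReal.ofReal (ν v * Real.exp (B v + sn n * A v)))
          Filter.atTop (𝓝 (ENNReal.ofReal (fstar v))) := by
        intro v
        refine (ENNReal.continuous_ofReal.tendsto _).comp ?_
        refine tendsto_const_nhds.mul ?_
        refine (Real.continuous_exp.tendsto _).comp ?_
        exact tendsto_const_nhds.add (hsntend.mul_const (A v))
      have hfatou : (∫⁻ v, ENNReal.ofReal (fstar v)) ≤ ENNReal.ofReal C := by
        have h1 : (∫⁻ v, ENNReal.ofReal (fstar v))
            = ∫⁻ v, Filter.liminf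
              (fun n => ENNReal.ofReal (ν v * Real.exp (B v + sn n * A v)))
              Filter.atTop := by
          refine lintegral_congr fun v => ?_
          rw [(hlim v).liminf_eq]
        rw [h1]
        refine le_trans (lintegral_liminf_le hmeasn) ?_
        have h2 : ∀ n, (∫⁻ v, ENNReal.ofReal (ν v * Real.exp (B v + sn n * A v)))
            ≤ ENNReal.ofReal C := by
          intro n
          rw [← ofReal_integral_eq_lintegral_ofReal (hf_int (sn n) (hsn1 n))
            (Eventually.of_forall fun v => mul_nonneg (hνpos v).le (Real.exp_pos _).le)]
          exact ENNReal.ofReal_le_ofReal (hbound n)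
        calc Filter.liminf
              (fun n => ∫⁻ v, ENNReal.ofReal (ν v * Real.exp (B v + sn n * A v)))
              Filter.atTop
            ≤ Filter.liminf (fun _ : ℕ => ENNReal.ofReal C) Filter.atTop :=
              Filter.liminf_le_liminf (Filter.Eventually.of_forall h2)
          _ = ENNReal.ofReal C := Filter.liminf_const _
      have hfint : Integrable fstar := by
        constructor
        · exact hfsm.aestronglyMeasurable
        · rw [hasFiniteIntegral_iff_ofReal
            (Eventually.of_forall fun v => mul_nonneg (hνpos v).le (Real.exp_pos _).le)]
          exact lt_of_le_of_lt hfatou ENNReal.ofReal_lt_top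
      have hcontra : (l + sb • η).2.2 < 0 := by
        apply (hass (l + sb • η)).mp
        have h2 : (fun v => ν v * expA m (l + sb • η) v) = fstar :=
          funext fun v => by rw [expA_line]
        rwa [h2]
      rw [hsnd] at hcontra
      linarith [hsbzero]
    obtain ⟨δ, hδpos, hδprop⟩ := hδ
    refine ⟨max 0 (sb - δ), le_max_left _ _, ?_, ?_⟩
    · rw [hsnd]
      have : max 0 (sb - δ) < sb := by
        rw [max_lt_iff]
        constructor <;> linarith
      nlinarith [hsbzero, this]
    · intro s hs hPs'
      have h1 : sb - δ < s := lt_of_le_of_lt (le_max_right _ _) hs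
      have h2 := hδprop s hPs' h1
      linarith [not_le.mp h2]

lemma strict_mid
    (m : ℝ) (hm : 0 < m)
    (ν : V3 → ℝ) (hνmeas : Measurable ν) (hνpos : ∀ v, 0 < ν v)
    (hass : ∀ l : L5, Integrable (fun v => ν v * expA m l v) ↔ l.2.2 < 0)
    (l : L5) (ξ : L5) (hξ0 : ξ ≠ 0) (ρ : L5) (s t : ℝ) (hst : s ≠ t)
    (hs : (l + s • ξ).2.2 < 0) (ht : (l + t • ξ).2.2 < 0) :
    zdual m ν (l + ((s + t) / 2) • ξ) ρ
      < (zdual m ν (l + s • ξ) ρ + zdual m ν (l + t • ξ) ρ) / 2 := by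
  set A : V3 → ℝ := fun v => dot5 ξ (aVec m v) with hA
  set B : V3 → ℝ := fun v => dot5 l (aVec m v) with hB
  have hAcont : Continuous A := cont_aVec_dot m ξ
  have hBcont : Continuous B := cont_aVec_dot m l
  have hsnd : ∀ u : ℝ, (l + u • ξ).2.2 = l.2.2 + u * ξ.2.2 := by
    intro u
    simp [Prod.snd_add, Prod.smul_snd, smul_eq_mul]
  have hAne : ∀ᵐ v : V3, A v ≠ 0 := aene m hm ξ hξ0
  have hf_int : ∀ u : ℝ, (l + u • ξ).2.2 < 0 →
      Integrable (fun v => ν v * Real.exp (B v + u * A v)) := by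
    intro u hu
    have h0 := (hass (l + u • ξ)).mpr hu
    have h2 : (fun v => ν v * expA m (l + u • ξ) v)
        = fun v => ν v * Real.exp (B v + u * A v) :=
      funext fun v => by rw [expA_line]
    rwa [h2] at h0
  have hmid : (l + ((s + t) / 2) • ξ).2.2 < 0 := by
    rw [hsnd]
    rw [hsnd] at hs ht
    linarith
  have hfs := hf_int s hs
  have hft := hf_int t ht
  have hfm := hf_int ((s + t) / 2) hmid
  set h : V3 → ℝ := fun v =>
    (ν v * Real.exp (B v + s * A v) + ν v * Real.exp (B v + t * A v)) / 2
      - ν v * Real.exp (B v + (s + t) / 2 * A v) with hh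
  have hexp_mid : ∀ v : V3, B v + (s + t) / 2 * A v
      = (1 / 2 : ℝ) * (B v + s * A v) + (1 / 2 : ℝ) * (B v + t * A v) := by
    intro v; ring
  have hnonneg : ∀ v, 0 ≤ h v := by
    intro v
    have hc := convexOn_exp.2 (Set.mem_univ (B v + s * A v))
      (Set.mem_univ (B v + t * A v)) (by norm_num : (0:ℝ) ≤ 1/2)
      (by norm_num : (0:ℝ) ≤ 1/2) (by norm_num : (1:ℝ)/2 + 1/2 = 1)
    simp only [smul_eq_mul] at hc
    rw [hh]
    simp only
    rw [hexp_mid v]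
    have := (hνpos v).le
    nlinarith [hc]
  have hstrict : ∀ᵐ v : V3, 0 < h v := by
    filter_upwards [hAne] with v hv
    have hxy : B v + s * A v ≠ B v + t * A v := by
      intro hcon
      apply hv
      have : (s - t) * A v = 0 := by linarith
      rcases mul_eq_zero.mp this with h1 | h1
      · exact absurd (by linarith : s = t) hst
      · exact h1
    have hc := strictConvexOn_exp.2 (Set.mem_univ (B v + s * A v))
      (Set.mem_univ (B v + t * A v)) hxy (by norm_num : (0:ℝ) < 1/2)
      (by norm_num : (0:ℝ) < 1/2) (by norm_num : (1:ℝ)/2 + 1/2 = 1)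
    simp only [smul_eq_mul] at hc
    rw [hh]
    simp only
    rw [hexp_mid v]
    nlinarith [hνpos v, hc]
  have hint : Integrable h := ((hfs.add hft).div_const 2).sub hfm
  have hpos : 0 < ∫ v, h v := by
    have h1 : 0 ≤ ∫ v, h v := integral_nonneg hnonneg
    rcases h1.lt_or_eq with h2 | h2
    · exact h2
    · exfalso
      have h3 := (integral_eq_zero_iff_of_nonneg_ae
        (Eventually.of_forall fun v => by
          simpa only [Pi.zero_apply] using hnonneg v) hint).mp h2.symm
      have h4 : ∀ᵐ v : V3, False := by
        filter_upwards [h3, hstrict] with v h5 h6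
        rw [Pi.zero_apply] at h5
        exact absurd h5 (ne_of_gt h6)
      have h5 : (volume : Measure V3) Set.univ = 0 := by
        have := h4
        rw [ae_iff] at this
        simpa using this
      simp at h5
  have hzs : zdual m ν (l + s • ξ) ρ
      = (∫ v, ν v * Real.exp (B v + s * A v)) - dot5 l ρ - s * dot5 ξ ρ := by
    unfold zdual
    rw [dot5_add_smul]
    have h2 : (fun v => ν v * expA m (l + s • ξ) v)
        = fun v => ν v * Real.exp (B v + s * A v) :=
      funext fun v => by rw [expA_line]
    rw [h2]; ring
  have hzt : zdual m ν (l + t • ξ) ρ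
      = (∫ v, ν v * Real.exp (B v + t * A v)) - dot5 l ρ - t * dot5 ξ ρ := by
    unfold zdual
    rw [dot5_add_smul]
    have h2 : (fun v => ν v * expA m (l + t • ξ) v)
        = fun v => ν v * Real.exp (B v + t * A v) :=
      funext fun v => by rw [expA_line]
    rw [h2]; ring
  have hzm : zdual m ν (l + ((s + t) / 2) • ξ) ρ
      = (∫ v, ν v * Real.exp (B v + (s + t) / 2 * A v)) - dot5 l ρ
        - (s + t) / 2 * dot5 ξ ρ := by
    unfold zdual
    rw [dot5_add_smul]
    have h2 : (fun v => ν v * expA m (l + ((s + t) / 2) • ξ) v)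
        = fun v => ν v * Real.exp (B v + (s + t) / 2 * A v) :=
      funext fun v => by rw [expA_line]
    rw [h2]; ring
  have hintegral : (∫ v, h v)
      = ((∫ v, ν v * Real.exp (B v + s * A v))
          + (∫ v, ν v * Real.exp (B v + t * A v))) / 2
        - ∫ v, ν v * Real.exp (B v + (s + t) / 2 * A v) := by
    have ha : Integrable (fun v =>
        (ν v * Real.exp (B v + s * A v) + ν v * Real.exp (B v + t * A v)) / 2) :=
      (hfs.add hft).div_const 2
    rw [hh]
    rw [integral_sub ha hfm]
    congr 1
    rw [integral_div, integral_add hfs hft]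
  rw [hzs, hzt, hzm]
  rw [hintegral] at hpos
  linarith

lemma phi_contAt
    (m : ℝ) (hm : 0 < m)
    (ν : V3 → ℝ) (hνmeas : Measurable ν) (hνpos : ∀ v, 0 < ν v)
    (hass : ∀ l : L5, Integrable (fun v => ν v * expA m l v) ↔ l.2.2 < 0)
    (l : L5) (ξ : L5) (ρ : L5) (s₀ : ℝ) (hs₀ : (l + s₀ • ξ).2.2 < 0) :
    ContinuousAt (fun s : ℝ => zdual m ν (l + s • ξ) ρ) s₀ := by
  set A : V3 → ℝ := fun v => dot5 ξ (aVec m v) with hA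
  set B : V3 → ℝ := fun v => dot5 l (aVec m v) with hB
  have hAcont : Continuous A := cont_aVec_dot m ξ
  have hBcont : Continuous B := cont_aVec_dot m l
  have hsnd : ∀ u : ℝ, (l + u • ξ).2.2 = l.2.2 + u * ξ.2.2 := by
    intro u
    simp [Prod.snd_add, Prod.smul_snd, smul_eq_mul]
  have hf_int : ∀ u : ℝ, (l + u • ξ).2.2 < 0 →
      Integrable (fun v => ν v * Real.exp (B v + u * A v)) := by
    intro u hu
    have h0 := (hass (l + u • ξ)).mpr hu
    have h2 : (fun v => ν v * expA m (l + u • ξ) v)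
        = fun v => ν v * Real.exp (B v + u * A v) :=
      funext fun v => by rw [expA_line]
    rwa [h2] at h0
  have hfun : (fun s : ℝ => zdual m ν (l + s • ξ) ρ)
      = fun s => (∫ v, ν v * Real.exp (B v + s * A v)) - dot5 l ρ - s * dot5 ξ ρ := by
    funext s
    unfold zdual
    rw [dot5_add_smul]
    have h2 : (fun v => ν v * expA m (l + s • ξ) v)
        = fun v => ν v * Real.exp (B v + s * A v) :=
      funext fun v => by rw [expA_line]
    rw [h2]; ring
  rw [hfun]
  have hopen : IsOpen {s : ℝ | l.2.2 + s * ξ.2.2 < 0} :=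
    isOpen_lt (by fun_prop) continuous_const
  have hmem : s₀ ∈ {s : ℝ | l.2.2 + s * ξ.2.2 < 0} := by
    rw [Set.mem_setOf_eq, ← hsnd]
    exact hs₀
  obtain ⟨ε, hεpos, hball⟩ := Metric.isOpen_iff.mp hopen s₀ hmem
  set δ : ℝ := ε / 2 with hδ
  have hδpos : 0 < δ := by positivity
  have hmemlo : (l + (s₀ - δ) • ξ).2.2 < 0 := by
    rw [hsnd]
    refine hball ?_
    rw [Metric.mem_ball, Real.dist_eq]
    rw [abs_of_nonpos (by linarith)]
    simp [hδ]
    linarith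
  have hmemhi : (l + (s₀ + δ) • ξ).2.2 < 0 := by
    rw [hsnd]
    refine hball ?_
    rw [Metric.mem_ball, Real.dist_eq]
    rw [abs_of_nonneg (by linarith)]
    simp [hδ]
    linarith
  have hΦ : ContinuousAt
      (fun s : ℝ => ∫ v, ν v * Real.exp (B v + s * A v)) s₀ := by
    refine continuousAt_of_dominated ?_ ?_ ?_ ?_
      (bound := fun v => ν v * Real.exp (B v + (s₀ - δ) * A v)
        + ν v * Real.exp (B v + (s₀ + δ) * A v))
    · refine Eventually.of_forall fun s => ?_
      exact (hνmeas.mul (Real.measurable_exp.comp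
        (hBcont.measurable.add (hAcont.measurable.const_mul s)))).aestronglyMeasurable
    · filter_upwards [Ioo_mem_nhds (by linarith : s₀ - δ < s₀) (by linarith : s₀ < s₀ + δ)]
        with s hsI
      refine Eventually.of_forall fun v => ?_
      rw [Real.norm_eq_abs,
        abs_of_nonneg (mul_nonneg (hνpos v).le (Real.exp_pos _).le)]
      rcases le_or_gt 0 (A v) with hA0 | hA0
      · have h1 : Real.exp (B v + s * A v) ≤ Real.exp (B v + (s₀ + δ) * A v) := by
          refine Real.exp_le_exp.mpr ?_
          nlinarith [hsI.2.le]
        nlinarith [Real.exp_pos (B v + (s₀ - δ) * A v), hνpos v,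
          mul_le_mul_of_nonneg_left h1 (hνpos v).le]
      · have h1 : Real.exp (B v + s * A v) ≤ Real.exp (B v + (s₀ - δ) * A v) := by
          refine Real.exp_le_exp.mpr ?_
          nlinarith [hsI.1.le]
        nlinarith [Real.exp_pos (B v + (s₀ + δ) * A v), hνpos v,
          mul_le_mul_of_nonneg_left h1 (hνpos v).le]
    · exact (hf_int _ hmemlo).add (hf_int _ hmemhi)
    · refine Eventually.of_forall fun v => ?_
      exact (continuous_const.mul (Real.continuous_exp.comp
        (continuous_const.add (continuous_id.mul continuous_const)))).continuousAt
  exact (hΦ.sub continuousAt_const).sub (continuousAt_id.mul continuousAt_const)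


/-- for `λ ∈ Λ`, a unit direction `ξ`, and `ρ = μ(g)` for an
admissible `g`, the function `s ↦ z(λ + sξ; ρ)` attains its minimum at a unique
point of the open interval `I(ξ,λ) = {s : λ + sξ ∈ Λ}`; in particular the
minimum is not attained at the endpoints. -/
theorem min_on_line
    (m : ℝ) (hm : 0 < m)
    (ν : V3 → ℝ) (hνmeas : Measurable ν) (hνpos : ∀ v, 0 < ν v)
    (hass : ∀ l : L5, Integrable (fun v => ν v * expA m l v) ↔ l.2.2 < 0)
    (hass2 : ∀ l : L5, l.2.2 < 0 →
      Integrable (fun v => ν v * (1 + nsq v) * expA m l v))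
    (l : L5) (hl : l.2.2 < 0)
    (ξ : L5) (hξ : ‖ξ‖ = 1)
    (g : V3 → ℝ) (hgmeas : Measurable g) (hg0 : ∀ v, 0 ≤ g v)
    (hgne : ¬ g =ᵐ[volume] (fun _ => (0 : ℝ)))
    (hgint : Integrable (fun v => ν v * (1 + nsq v) * g v)) :
    ∃! s : ℝ, (l + s • ξ).2.2 < 0 ∧
      ∀ t : ℝ, (l + t • ξ).2.2 < 0 →
        zdual m ν (l + s • ξ) (momVec m ν g) ≤
          zdual m ν (l + t • ξ) (momVec m ν g) := by
  have hξ0 : ξ ≠ 0 := by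
    intro h
    rw [h] at hξ
    simp at hξ
  set ρ : L5 := momVec m ν g with hρ
  have hsnd : ∀ (w : L5) (s : ℝ), (l + s • w).2.2 = l.2.2 + s * w.2.2 := by
    intro w s
    simp [Prod.snd_add, Prod.smul_snd, smul_eq_mul]
  obtain ⟨b1, hb10, hb1P, hb1⟩ := coercive_right m hm ν hνmeas hνpos hass l hl ξ hξ0
    g hgmeas hg0 hgne hgint
  obtain ⟨b2, hb20, hb2P, hb2⟩ := coercive_right m hm ν hνmeas hνpos hass l hl (-ξ)
    (neg_ne_zero.mpr hξ0) g hgmeas hg0 hgne hgint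
  have htr : ∀ s : ℝ, l + s • (-ξ) = l + (-s) • ξ := by
    intro s
    rw [smul_neg, ← neg_smul]
  have hPmem : ∀ a b s : ℝ, (l + a • ξ).2.2 < 0 → (l + b • ξ).2.2 < 0 →
      a ≤ s → s ≤ b → (l + s • ξ).2.2 < 0 := by
    intro a b s ha hb has hsb
    rw [hsnd] at ha hb ⊢
    rcases le_or_gt 0 ξ.2.2 with h | h
    · nlinarith [mul_nonneg (sub_nonneg.mpr hsb) h]
    · nlinarith [mul_nonneg (sub_nonneg.mpr has) (neg_nonneg.mpr h.le)]
  have hb2P' : (l + (-b2) • ξ).2.2 < 0 := by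
    rwa [htr] at hb2P
  set K : Set ℝ := Set.Icc (-b2) b1 with hK
  have h0K : (0:ℝ) ∈ K := ⟨by linarith, hb10⟩
  have hPK : ∀ s ∈ K, (l + s • ξ).2.2 < 0 := fun s hs =>
    hPmem _ _ s hb2P' hb1P hs.1 hs.2
  have hcont : ContinuousOn (fun s => zdual m ν (l + s • ξ) ρ) K := fun s hs =>
    (phi_contAt m hm ν hνmeas hνpos hass l ξ ρ s (hPK s hs)).continuousWithinAt
  obtain ⟨s₀, hs₀K, hs₀min⟩ := isCompact_Icc.exists_isMinOn ⟨0, h0K⟩ hcont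
  have hl0 : l + (0:ℝ) • ξ = l := by rw [zero_smul, add_zero]
  have hglobal : ∀ t : ℝ, (l + t • ξ).2.2 < 0 →
      zdual m ν (l + s₀ • ξ) ρ ≤ zdual m ν (l + t • ξ) ρ := by
    intro t hPt
    by_cases htK : t ∈ K
    · exact isMinOn_iff.mp hs₀min t htK
    · have h00 : zdual m ν (l + s₀ • ξ) ρ ≤ zdual m ν l ρ := by
        have h01 := isMinOn_iff.mp hs₀min 0 h0K
        rwa [hl0] at h01
      rw [hK, Set.mem_Icc, not_and_or, not_le, not_le] at htK
      rcases htK with h | h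
      · have hP' : (l + (-t) • (-ξ)).2.2 < 0 := by
          rw [htr, neg_neg]
          exact hPt
        have h02 := hb2 (-t) (by linarith) hP'
        rw [htr, neg_neg] at h02
        linarith
      · have h02 := hb1 t h hPt
        linarith
  refine ⟨s₀, ⟨hPK s₀ hs₀K, hglobal⟩, ?_⟩
  rintro s' ⟨hPs', hmin'⟩
  by_contra hne
  have hmidP : (l + ((s' + s₀) / 2) • ξ).2.2 < 0 := by
    have ha := hPs'
    have hb' := hPK s₀ hs₀K
    rw [hsnd] at ha hb' ⊢
    linarith
  have h1 := strict_mid m hm ν hνmeas hνpos hass l ξ hξ0 ρ s' s₀ hne hPs'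
    (hPK s₀ hs₀K)
  have h2 := hmin' _ hmidP
  have h3 := hglobal _ hmidP
  linarith
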